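/- Let f and g be norms on ℝ^p with dual norms f* and g*, let (a, b) be a linear classifier with a ≠ 0, let ρ > 0, let x_F ∈ ℝ^p satisfy ⟪a, x_F⟫ < b, and let x_RCF ∈ ℝ^p with x_RCF ≠ x_F. Then x_RCF is an optimal robust counterfactual of x_F under f with robustness norm g and radius ρ if and only if there exists λ ∈ ℝ with λ ≠ 0 such that: ⟪a, x_RCF⟫ − ρ · g*(a) = b, λ · ⟪a, x_RCF − x_F⟫ = f(x_RCF − x_F), and f*(λ • a) ≤ 1. -/

import Mathlib

open Finset

noncomputable section

/-- The standard inner product on `Fin p → ℝ`. -/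
def dot {p : ℕ} (a x : Fin p → ℝ) : ℝ := ∑ k, a k * x k

/-- `f` is a norm on `ℝ^p`. -/
def IsNorm {p : ℕ} (f : (Fin p → ℝ) → ℝ) : Prop :=
  (∀ x, f x = 0 ↔ x = 0) ∧ (∀ (c : ℝ) (x : Fin p → ℝ), f (c • x) = |c| * f x) ∧
    (∀ x y, f (x + y) ≤ f x + f y)

/-- The dual norm `f*(w) = sup { ⟪w, v⟫ : f v ≤ 1 }`. -/
def dualNorm {p : ℕ} (f : (Fin p → ℝ) → ℝ) (w : Fin p → ℝ) : ℝ :=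
  sSup {t : ℝ | ∃ v : Fin p → ℝ, f v ≤ 1 ∧ t = dot w v}

/-- `xCF` is an optimal counterfactual of the factual `xF` (classified 'No') under norm `f`. -/
def IsOptCF {p : ℕ} (a : Fin p → ℝ) (b : ℝ) (f : (Fin p → ℝ) → ℝ)
    (xF xCF : Fin p → ℝ) : Prop :=
  b ≤ dot a xCF ∧ ∀ z : Fin p → ℝ, b ≤ dot a z → f (xCF - xF) ≤ f (z - xF)

/-- `xRCF` is an optimal robust counterfactual of the factual `xF` (classified 'No')
under norm `f`, with robustness norm `g` and radius `ρ`. -/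
def IsOptRCF {p : ℕ} (a : Fin p → ℝ) (b : ℝ) (f g : (Fin p → ℝ) → ℝ) (ρ : ℝ)
    (xF xRCF : Fin p → ℝ) : Prop :=
  (∀ s : Fin p → ℝ, g s ≤ ρ → b ≤ dot a (xRCF + s)) ∧
    ∀ z : Fin p → ℝ, (∀ s : Fin p → ℝ, g s ≤ ρ → b ≤ dot a (z + s)) →
      f (xRCF - xF) ≤ f (z - xF)

/-- `w` is a subgradient of `f` at `x₀`. -/
def IsSubgradient {p : ℕ} (f : (Fin p → ℝ) → ℝ) (x₀ w : Fin p → ℝ) : Prop :=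
  ∀ y : Fin p → ℝ, f x₀ + dot w (y - x₀) ≤ f y

variable {p : ℕ} {f : (Fin p → ℝ) → ℝ}

lemma mydot_add (a x y : Fin p → ℝ) : dot a (x + y) = dot a x + dot a y := by
  simp [dot, mul_add, Finset.sum_add_distrib]

lemma mydot_smul (a : Fin p → ℝ) (c : ℝ) (x : Fin p → ℝ) : dot a (c • x) = c * dot a x := by
  simp [dot, Finset.mul_sum]; apply Finset.sum_congr rfl; intros; ring

lemma mydot_smul_left (a : Fin p → ℝ) (c : ℝ) (x : Fin p → ℝ) : dot (c • a) x = c * dot a x := by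
  simp [dot, Finset.mul_sum]; apply Finset.sum_congr rfl; intros; ring

lemma mydot_zero (a : Fin p → ℝ) : dot a 0 = 0 := by simp [dot]

lemma mydot_sub (a x y : Fin p → ℝ) : dot a (x - y) = dot a x - dot a y := by
  simp [dot, mul_sub, Finset.sum_sub_distrib]

lemma mydot_neg (a x : Fin p → ℝ) : dot a (-x) = - dot a x := by
  simp [dot, Finset.sum_neg_distrib]

lemma mydot_self_pos {a : Fin p → ℝ} (ha : a ≠ 0) : 0 < dot a a := by
  have h : ∃ k, a k ≠ 0 := by
    by_contra h; push_neg at h; exact ha (funext h)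
  obtain ⟨k, hk⟩ := h
  have : (0:ℝ) < ∑ j, a j * a j := by
    apply Finset.sum_pos' (fun j _ => mul_self_nonneg _)
    exact ⟨k, Finset.mem_univ k, by have := mul_self_pos.2 hk; linarith⟩
  simpa [dot] using this

lemma myn_zero (hf : IsNorm f) : f 0 = 0 := (hf.1 0).2 rfl

lemma myn_neg (hf : IsNorm f) (x : Fin p → ℝ) : f (-x) = f x := by
  have := hf.2.1 (-1) x; simpa using this

lemma myn_nonneg (hf : IsNorm f) (x : Fin p → ℝ) : 0 ≤ f x := by
  have h := hf.2.2 x (-x)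
  rw [add_neg_cancel, myn_zero hf, myn_neg hf] at h
  linarith

lemma myn_pos (hf : IsNorm f) {x : Fin p → ℝ} (hx : x ≠ 0) : 0 < f x :=
  lt_of_le_of_ne (myn_nonneg hf x) (fun h => hx ((hf.1 x).1 h.symm))

lemma myn_upper (hf : IsNorm f) : ∃ C : ℝ, 0 ≤ C ∧ ∀ v, f v ≤ C * ‖v‖ := by
  refine ⟨∑ i, f (Pi.single i 1), Finset.sum_nonneg fun i _ => myn_nonneg hf _, fun v => ?_⟩
  have hv : v = ∑ i, v i • (Pi.single i 1 : Fin p → ℝ) := by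
    funext j
    simp [Pi.single_apply, Finset.sum_apply]
  calc f v = f (∑ i, v i • (Pi.single i 1 : Fin p → ℝ)) := by rw [← hv]
    _ ≤ ∑ i, f (v i • (Pi.single i 1 : Fin p → ℝ)) :=
        Finset.le_sum_of_subadditive f (myn_zero hf).le hf.2.2 _ _
    _ = ∑ i, |v i| * f ((Pi.single i 1 : Fin p → ℝ)) := by
        apply Finset.sum_congr rfl; intros i _; exact hf.2.1 _ _
    _ ≤ ∑ i, ‖v‖ * f ((Pi.single i 1 : Fin p → ℝ)) := by
        apply Finset.sum_le_sum; intro i _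
        exact mul_le_mul_of_nonneg_right (by simpa using norm_le_pi_norm v i) (myn_nonneg hf _)
    _ = (∑ i, f (Pi.single i 1)) * ‖v‖ := by rw [Finset.sum_mul]; apply Finset.sum_congr rfl; intros; ring

lemma myn_cont (hf : IsNorm f) : Continuous f := by
  obtain ⟨C, hC0, hC⟩ := myn_upper hf
  have key : ∀ x y : Fin p → ℝ, f x - f y ≤ C * ‖x - y‖ := by
    intro x y
    have h1 := hf.2.2 (x - y) y
    simp only [sub_add_cancel] at h1
    have := hC (x - y)
    linarith
  have lip : LipschitzWith (Real.toNNReal C) f := by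
    apply LipschitzWith.of_dist_le_mul
    intro x y
    rw [Real.dist_eq, abs_sub_le_iff]
    have h1 := key x y
    have h2 := key y x
    rw [← dist_eq_norm] at h1 h2
    rw [dist_comm] at h2
    constructor <;> [skip; skip] <;>
      { have : (Real.toNNReal C : ℝ) = C := Real.coe_toNNReal C hC0
        rw [this]; linarith }
  exact lip.continuous

lemma myn_lower (hp : 1 ≤ p) (hf : IsNorm f) : ∃ m : ℝ, 0 < m ∧ ∀ v, m * ‖v‖ ≤ f v := by
  haveI : Nonempty (Fin p) := ⟨⟨0, hp⟩⟩
  have hsph : (Metric.sphere (0 : Fin p → ℝ) 1).Nonempty := by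
    haveI : Nontrivial (Fin p → ℝ) := Function.nontrivial
    exact NormedSpace.sphere_nonempty.2 zero_le_one
  obtain ⟨v₀, hv₀mem, hv₀min⟩ :=
    (isCompact_sphere (0 : Fin p → ℝ) 1).exists_isMinOn hsph ((myn_cont hf).continuousOn)
  have hv₀norm : ‖v₀‖ = 1 := by simpa using hv₀mem
  have hv₀ne : v₀ ≠ 0 := by intro h; rw [h] at hv₀norm; simp at hv₀norm
  refine ⟨f v₀, myn_pos hf hv₀ne, fun v => ?_⟩
  rcases eq_or_ne v 0 with rfl | hv
  · simp [myn_zero hf]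
  · have hnv : (0:ℝ) < ‖v‖ := norm_pos_iff.2 hv
    have hu : ‖v‖⁻¹ • v ∈ Metric.sphere (0 : Fin p → ℝ) 1 := by
      simp [norm_smul, abs_of_pos (inv_pos.2 hnv), inv_mul_cancel₀ hnv.ne']
    have h1 : f v₀ ≤ f (‖v‖⁻¹ • v) := hv₀min hu
    have h2 : f (‖v‖⁻¹ • v) = ‖v‖⁻¹ * f v := by
      rw [hf.2.1]; rw [abs_of_pos (inv_pos.2 hnv)]
    rw [h2] at h1
    calc f v₀ * ‖v‖ ≤ (‖v‖⁻¹ * f v) * ‖v‖ := by nlinarith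
      _ = f v := by field_simp

lemma mydot_cont (a : Fin p → ℝ) : Continuous (fun v => dot a v) := by
  unfold dot
  exact continuous_finset_sum _ (fun k _ => continuous_const.mul (continuous_apply k))

lemma dual_attained (hp : 1 ≤ p) (hf : IsNorm f) (a : Fin p → ℝ) :
    ∃ v₀ : Fin p → ℝ, f v₀ ≤ 1 ∧ dualNorm f a = dot a v₀ ∧
      ∀ v, f v ≤ 1 → dot a v ≤ dot a v₀ := by
  obtain ⟨m, hm, hml⟩ := myn_lower hp hf
  set K : Set (Fin p → ℝ) := {v | f v ≤ 1} with hK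
  have hKc : IsCompact K := by
    have hclosed : IsClosed K := isClosed_le (myn_cont hf) continuous_const
    have hbdd : Bornology.IsBounded K := by
      apply Bornology.IsBounded.subset (Metric.isBounded_closedBall (x := (0:Fin p → ℝ)) (r := m⁻¹))
      intro v hv
      simp only [Metric.mem_closedBall, dist_zero_right]
      have := hml v
      rw [← le_div_iff₀' hm] at this
      calc ‖v‖ ≤ f v / m := this
        _ ≤ 1 / m := by gcongr; exact hv
        _ = m⁻¹ := one_div m
    exact Metric.isCompact_of_isClosed_isBounded hclosed hbdd
  have hKne : K.Nonempty := ⟨0, by simp [hK, myn_zero hf]⟩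
  obtain ⟨v₀, hv₀K, hv₀max⟩ := hKc.exists_isMaxOn hKne ((mydot_cont a).continuousOn)
  refine ⟨v₀, hv₀K, ?_, fun v hv => hv₀max hv⟩
  have hne : {t : ℝ | ∃ v : Fin p → ℝ, f v ≤ 1 ∧ t = dot a v}.Nonempty :=
    ⟨dot a 0, 0, by simp [myn_zero hf], rfl⟩
  have hub : dot a v₀ ∈ upperBounds {t : ℝ | ∃ v : Fin p → ℝ, f v ≤ 1 ∧ t = dot a v} := by
    rintro t ⟨v, hv, rfl⟩
    exact hv₀max hv
  apply le_antisymm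
  · exact csSup_le hne (fun t ht => hub ht)
  · exact le_csSup ⟨dot a v₀, hub⟩ ⟨v₀, hv₀K, rfl⟩

lemma dual_nonneg (hp : 1 ≤ p) (hf : IsNorm f) (a : Fin p → ℝ) : 0 ≤ dualNorm f a := by
  obtain ⟨v₀, hv₀, heq, hmax⟩ := dual_attained hp hf a
  rw [heq]
  have := hmax 0 (by simp [myn_zero hf])
  simpa [mydot_zero] using this

lemma dot_le_dual_mul (hp : 1 ≤ p) (hf : IsNorm f) (a v : Fin p → ℝ) :
    dot a v ≤ dualNorm f a * f v := by
  obtain ⟨v₀, hv₀, heq, hmax⟩ := dual_attained hp hf a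
  rcases eq_or_ne v 0 with rfl | hv
  · simp [mydot_zero, myn_zero hf]
  · have hfv : 0 < f v := myn_pos hf hv
    have h1 : f ((f v)⁻¹ • v) ≤ 1 := by
      rw [hf.2.1, abs_of_pos (inv_pos.2 hfv), inv_mul_cancel₀ hfv.ne']
    have h2 := hmax _ h1
    rw [mydot_smul] at h2
    rw [heq]
    calc dot a v = f v * ((f v)⁻¹ * dot a v) := by field_simp
      _ ≤ f v * dot a v₀ := mul_le_mul_of_nonneg_left h2 hfv.le
      _ = dot a v₀ * f v := mul_comm _ _

lemma dual_pos (hp : 1 ≤ p) (hf : IsNorm f) {a : Fin p → ℝ} (ha : a ≠ 0) :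
    0 < dualNorm f a := by
  obtain ⟨v₀, hv₀, heq, hmax⟩ := dual_attained hp hf a
  have hfa : 0 < f a := myn_pos hf ha
  have h1 : f ((f a)⁻¹ • a) ≤ 1 := by
    rw [hf.2.1, abs_of_pos (inv_pos.2 hfa), inv_mul_cancel₀ hfa.ne']
  have h2 := hmax _ h1
  rw [mydot_smul] at h2
  have h3 : 0 < (f a)⁻¹ * dot a a := mul_pos (inv_pos.2 hfa) (mydot_self_pos ha)
  rw [heq]; linarith


lemma feas_iff (hp : 1 ≤ p) {g : (Fin p → ℝ) → ℝ} (hg : IsNorm g) (a : Fin p → ℝ)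
    {ρ : ℝ} (hρ : 0 < ρ) (b : ℝ) (z : Fin p → ℝ) :
    (∀ s : Fin p → ℝ, g s ≤ ρ → b ≤ dot a (z + s)) ↔
      b + ρ * dualNorm g a ≤ dot a z := by
  obtain ⟨w₀, hw₀, hgeq, hgmax⟩ := dual_attained hp hg a
  constructor
  · intro h
    have hs : g (-(ρ • w₀)) ≤ ρ := by
      rw [myn_neg hg, hg.2.1, abs_of_pos hρ]
      nlinarith [myn_nonneg hg w₀]
    have := h _ hs
    rw [mydot_add, mydot_neg, mydot_smul] at this
    rw [hgeq]; linarith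
  · intro hz s hs
    have h1 : g (ρ⁻¹ • (-s)) ≤ 1 := by
      rw [hg.2.1, abs_of_pos (inv_pos.2 hρ), myn_neg hg]
      rw [inv_mul_le_iff₀ hρ, mul_one]; exact hs
    have h2 := hgmax _ h1
    rw [mydot_smul, mydot_neg] at h2
    have h3 : -dot a s ≤ ρ * dualNorm g a := by
      rw [hgeq]
      calc -dot a s = ρ * (ρ⁻¹ * -dot a s) := by field_simp
        _ ≤ ρ * dot a w₀ := mul_le_mul_of_nonneg_left h2 hρ.le
    rw [mydot_add]; linarith


/-- Optimality conditions for robust counterfactuals under arbitrary norms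
(Corollary 3): `x_RCF` is an optimal robust counterfactual iff there is `λ ≠ 0` with
`⟪a, x_RCF⟫ − ρ·g*(a) = b`, `λ⟪a, x_RCF − x_F⟫ = f(x_RCF − x_F)` and `f*(λ • a) ≤ 1`. -/
theorem rcf_optimality_iff {p : ℕ} (hp : 1 ≤ p)
    (f g : (Fin p → ℝ) → ℝ) (hf : IsNorm f) (hg : IsNorm g)
    (a : Fin p → ℝ) (ha : a ≠ 0) (b : ℝ) (ρ : ℝ) (hρ : 0 < ρ)
    (xF xRCF : Fin p → ℝ) (hxF : dot a xF < b) (hne : xRCF ≠ xF) :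
    IsOptRCF a b f g ρ xF xRCF ↔
      ∃ l : ℝ, l ≠ 0 ∧ dot a xRCF - ρ * dualNorm g a = b ∧
        l * dot a (xRCF - xF) = f (xRCF - xF) ∧ dualNorm f (l • a) ≤ 1 := by
  set gs := dualNorm g a with hgs
  set b' := b + ρ * gs with hb'
  have hgs0 : 0 ≤ gs := dual_nonneg hp hg a
  have hbb' : b ≤ b' := by nlinarith
  have hxFb' : dot a xF < b' := lt_of_lt_of_le hxF hbb'
  set d := xRCF - xF with hd
  have hdne : d ≠ 0 := sub_ne_zero.2 hne
  have hfd : 0 < f d := myn_pos hf hdne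
  have hcd : dot a d = dot a xRCF - dot a xF := mydot_sub a xRCF xF
  constructor
  · rintro ⟨hfeas, hopt⟩
    have h1 : b' ≤ dot a xRCF := (feas_iff hp hg a hρ b xRCF).1 hfeas
    -- equality
    have heq : dot a xRCF = b' := by
      by_contra hlt
      have h2 : b' < dot a xRCF := lt_of_le_of_ne h1 (Ne.symm hlt)
      have hc : 0 < dot a d := by rw [hcd]; linarith
      set t : ℝ := (b' - dot a xF) / dot a d with ht
      have ht0 : 0 < t := div_pos (by linarith) hc
      have ht1 : t < 1 := by
        rw [div_lt_one hc, hcd]; linarith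
      have hz : (∀ s : Fin p → ℝ, g s ≤ ρ → b ≤ dot a ((xF + t • d) + s)) := by
        rw [feas_iff hp hg a hρ]
        rw [mydot_add, mydot_smul]
        have : t * dot a d = b' - dot a xF := by
          rw [ht]; field_simp
        linarith
      have h3 := hopt _ hz
      have h4 : xF + t • d - xF = t • d := by abel
      rw [h4, hf.2.1, abs_of_pos ht0] at h3
      nlinarith
    have hc : dot a d = b' - dot a xF := by rw [hcd, heq]
    have hcpos : 0 < dot a d := by rw [hc]; linarith
    obtain ⟨v₀, hv₀, hFeq, hFmax⟩ := dual_attained hp hf a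
    set F := dualNorm f a with hF
    have hFpos : 0 < F := dual_pos hp hf ha
    refine ⟨F⁻¹, inv_ne_zero hFpos.ne', by rw [heq, hb']; ring, ?_, ?_⟩
    · -- F⁻¹ * dot a d = f d
      apply le_antisymm
      · have := dot_le_dual_mul hp hf a d
        rw [← hF] at this
        calc F⁻¹ * dot a d ≤ F⁻¹ * (F * f d) :=
              mul_le_mul_of_nonneg_left this (inv_pos.2 hFpos).le
          _ = f d := by field_simp
      · have hv₀F : dot a v₀ = F := hFeq.symm
        set z := xF + (dot a d / F) • v₀ with hzdef
        have hzfeas : (∀ s : Fin p → ℝ, g s ≤ ρ → b ≤ dot a (z + s)) := by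
          rw [feas_iff hp hg a hρ, hzdef, mydot_add, mydot_smul, hv₀F]
          have : dot a d / F * F = dot a d := by field_simp
          rw [this, hc]; linarith
        have h3 := hopt _ hzfeas
        have h4 : z - xF = (dot a d / F) • v₀ := by rw [hzdef]; abel
        rw [h4, hf.2.1, abs_of_pos (div_pos hcpos hFpos)] at h3
        calc f d ≤ dot a d / F * f v₀ := h3
          _ ≤ dot a d / F * 1 :=
              mul_le_mul_of_nonneg_left hv₀ (div_pos hcpos hFpos).le
          _ = F⁻¹ * dot a d := by field_simp
    · -- dualNorm f (F⁻¹ • a) ≤ 1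
      have hne2 : {t : ℝ | ∃ v : Fin p → ℝ, f v ≤ 1 ∧ t = dot (F⁻¹ • a) v}.Nonempty :=
        ⟨dot (F⁻¹ • a) 0, 0, by simp [myn_zero hf], rfl⟩
      apply csSup_le hne2
      rintro t ⟨v, hv, rfl⟩
      rw [mydot_smul_left]
      have h5 : dot a v ≤ F := by rw [hFeq]; exact hFmax v hv
      calc F⁻¹ * dot a v ≤ F⁻¹ * F :=
            mul_le_mul_of_nonneg_left h5 (inv_pos.2 hFpos).le
        _ = 1 := inv_mul_cancel₀ hFpos.ne'
  · rintro ⟨l, hl, heq, hlc, hdual⟩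
    have heq' : dot a xRCF = b' := by rw [hb']; linarith
    have hcpos : 0 < dot a d := by rw [hcd, heq']; linarith
    have hlpos : 0 < l := by nlinarith
    constructor
    · rw [feas_iff hp hg a hρ, heq']
    · intro z hz
      have h1 : b' ≤ dot a z := (feas_iff hp hg a hρ b z).1 hz
      have h2 : dot a d ≤ dot a (z - xF) := by
        rw [mydot_sub a z xF]
        have := mydot_sub a xRCF xF
        rw [hcd, heq']; linarith
      have h3 : dot (l • a) (z - xF) ≤ dualNorm f (l • a) * f (z - xF) :=
        dot_le_dual_mul hp hf (l • a) (z - xF)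
      rw [mydot_smul_left] at h3
      have h4 : dualNorm f (l • a) * f (z - xF) ≤ f (z - xF) := by
        nlinarith [myn_nonneg hf (z - xF)]
      calc f d = l * dot a d := hlc.symm
        _ ≤ l * dot a (z - xF) := mul_le_mul_of_nonneg_left h2 hlpos.le
        _ ≤ f (z - xF) := le_trans h3 h4
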